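/- Let C be a multiset of k ≥ 1 roots of f = g·h (g(z)=∏_{α∈C}(z−α), h holomorphic nonvanishing near the relevant points). If m ∈ ℂ and r > 0 satisfy 8ek(|m−m_C| + r_C) ≤ r ≤ 1/(2γ(h,m)), then |f_k(m)|·r^k ≥ 4·Σ_{j=0}^{k−1}|f_j(m)|·r^j, where f_j = f^{(j)}/j!. -/

import Mathlib

open Complex Metric Finset Polynomial

def gammaSet (h : ℂ → ℂ) (z : ℂ) : Set ℝ :=
  {x | ∃ k : ℕ, 1 ≤ k ∧ x = ‖iteratedDeriv k h z / ((k.factorial : ℂ) * h z)‖ ^ ((1 : ℝ) / k)}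

private lemma diff_iter {F : ℂ → ℂ} (hF : Differentiable ℂ F) (i : ℕ) :
    Differentiable ℂ (iteratedDeriv i F) :=
  (hF.contDiff (n := ⊤)).differentiable_iteratedDeriv i (by exact_mod_cast WithTop.coe_lt_top _)

private lemma leibniz (f g : ℂ → ℂ) (hf : Differentiable ℂ f) (hg : Differentiable ℂ g) (n : ℕ) :
    iteratedDeriv n (fun x => f x * g x) =
      fun x => ∑ i ∈ range (n+1),
        (n.choose i : ℂ) * (iteratedDeriv i f x * iteratedDeriv (n-i) g x) := by
  induction n with
  | zero => simp
  | succ n ih =>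
    rw [iteratedDeriv_succ, ih]
    funext x
    rw [deriv_fun_sum (fun i _ => by
      exact (((diff_iter hf i).differentiableAt.fun_mul
        (diff_iter hg (n-i)).differentiableAt).const_mul _))]
    have step : ∀ i ∈ range (n+1),
        deriv (fun x => (n.choose i : ℂ) *
          (iteratedDeriv i f x * iteratedDeriv (n-i) g x)) x =
        (n.choose i : ℂ) * (iteratedDeriv (i+1) f x * iteratedDeriv (n-i) g x) +
        (n.choose i : ℂ) * (iteratedDeriv i f x * iteratedDeriv (n-i+1) g x) := by
      intro i _
      rw [deriv_const_mul _ ((diff_iter hf i).differentiableAt.fun_mul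
            (diff_iter hg (n-i)).differentiableAt),
          deriv_fun_mul (diff_iter hf i).differentiableAt (diff_iter hg (n-i)).differentiableAt,
          iteratedDeriv_succ, iteratedDeriv_succ]
      ring
    rw [Finset.sum_congr rfl step, Finset.sum_add_distrib]
    have h1 : ∑ i ∈ range (n+1), (n.choose i : ℂ) *
        (iteratedDeriv (i+1) f x * iteratedDeriv (n-i) g x)
      = ∑ i ∈ range (n+2), ((if i = 0 then 0 else (n.choose (i-1) : ℂ)) *
        (iteratedDeriv i f x * iteratedDeriv (n+1-i) g x)) := by
      rw [Finset.sum_range_succ' (fun i => (if i = 0 then 0 else (n.choose (i-1) : ℂ)) *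
        (iteratedDeriv i f x * iteratedDeriv (n+1-i) g x)) (n+1)]
      simp [Nat.succ_sub_succ]
    have h2 : ∑ i ∈ range (n+1), (n.choose i : ℂ) *
        (iteratedDeriv i f x * iteratedDeriv (n-i+1) g x)
      = ∑ i ∈ range (n+2), ((n.choose i : ℂ) *
        (iteratedDeriv i f x * iteratedDeriv (n+1-i) g x)) := by
      rw [Finset.sum_range_succ _ (n+1)]
      simp only [Nat.choose_succ_self, Nat.cast_zero, zero_mul, add_zero]
      exact Finset.sum_congr rfl fun i hi => by
        rw [mem_range] at hi
        have e : n + 1 - i = n - i + 1 := by omega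
        rw [e]
    rw [h1, h2, ← Finset.sum_add_distrib]
    refine Finset.sum_congr rfl fun i hi => ?_
    rcases Nat.eq_zero_or_pos i with h0 | h0
    · subst h0; simp
    · rw [if_neg h0.ne', ← add_mul]
      congr 1
      obtain ⟨j, rfl⟩ := Nat.exists_eq_add_of_le h0
      rw [Nat.add_comm 1 j, Nat.add_sub_cancel, Nat.choose_succ_succ (n) j]
      push_cast
      ring

private lemma leibniz_div (f g : ℂ → ℂ) (hf : Differentiable ℂ f) (hg : Differentiable ℂ g)
    (n : ℕ) (x : ℂ) :
    iteratedDeriv n (fun x => f x * g x) x / (n.factorial : ℂ) =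
      ∑ i ∈ range (n+1), (iteratedDeriv i f x / (i.factorial : ℂ)) *
        (iteratedDeriv (n-i) g x / ((n-i).factorial : ℂ)) := by
  rw [leibniz f g hf hg n, Finset.sum_div]
  refine Finset.sum_congr rfl fun i hi => ?_
  rw [mem_range] at hi
  rw [Nat.cast_choose ℂ (by omega : i ≤ n)]
  have h1 : (i.factorial : ℂ) ≠ 0 := Nat.cast_ne_zero.mpr (Nat.factorial_ne_zero _)
  have h2 : ((n-i).factorial : ℂ) ≠ 0 := Nat.cast_ne_zero.mpr (Nat.factorial_ne_zero _)
  have h3 : (n.factorial : ℂ) ≠ 0 := Nat.cast_ne_zero.mpr (Nat.factorial_ne_zero _)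
  field_simp

private lemma iteratedDeriv_polyeval (p : Polynomial ℂ) (n : ℕ) :
    iteratedDeriv n (fun x => p.eval x) = fun x => (derivative^[n] p).eval x := by
  induction n with
  | zero => simp
  | succ n ih =>
    rw [iteratedDeriv_succ, ih, Function.iterate_succ_apply']
    funext x
    exact Polynomial.deriv _

private lemma iterD_poly (p : Polynomial ℂ) (m : ℂ) (i : ℕ) :
    iteratedDeriv i (fun x => p.eval x) m = (i.factorial : ℂ) * ((taylor m p).coeff i) := by
  rw [iteratedDeriv_polyeval]
  rw [taylor_coeff, ← Polynomial.factorial_smul_hasseDeriv]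
  simp only [Pi.smul_apply, LinearMap.smul_apply]
  rw [Polynomial.eval_smul, nsmul_eq_mul]

private lemma taylor_prod_coeff (C : Multiset ℂ) (m : ℂ) (i : ℕ) (hik : i ≤ Multiset.card C) :
    ((taylor m) ((C.map fun α => X - Polynomial.C α).prod)).coeff i
      = (C.map fun α => m - α).esymm (Multiset.card C - i) := by
  have h1 : (taylor m) ((C.map fun α => X - Polynomial.C α).prod)
      = ((C.map fun α => m - α).map fun c => X + Polynomial.C c).prod := by
    rw [show (taylor m) ((C.map fun α => X - Polynomial.C α).prod)
        = taylorAlgHom m ((C.map fun α => X - Polynomial.C α).prod) from rfl,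
      map_multiset_prod, Multiset.map_map, Multiset.map_map]
    congr 1
    apply Multiset.map_congr rfl
    intro α _
    simp only [Function.comp_apply, taylorAlgHom_apply, map_sub, taylor_X, taylor_C]
    ring
  rw [h1, Multiset.prod_X_add_C_coeff _ (by simpa using hik)]
  congr 1
  simp

private lemma prod_norm_le (ρ : ℝ) (hρ0 : 0 ≤ ρ) :
    ∀ (S : Multiset ℂ), (∀ x ∈ S, ‖x‖ ≤ ρ) → ‖S.prod‖ ≤ ρ ^ (Multiset.card S) := by
  intro S
  induction S using Multiset.induction with
  | empty => simp
  | cons a S ih =>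
    intro hx
    rw [Multiset.prod_cons, Multiset.card_cons]
    calc ‖a * S.prod‖ = ‖a‖ * ‖S.prod‖ := norm_mul _ _
    _ ≤ ρ * ρ ^ (Multiset.card S) := by
        apply mul_le_mul (hx a (Multiset.mem_cons_self a S))
          (ih fun x hxS => hx x (Multiset.mem_cons_of_mem hxS)) (norm_nonneg _) hρ0
    _ = ρ ^ (Multiset.card S + 1) := by ring

private lemma esymm_norm_le (D : Multiset ℂ) (ρ : ℝ) (hρ0 : 0 ≤ ρ)
    (hρ : ∀ x ∈ D, ‖x‖ ≤ ρ) (t : ℕ) :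
    ‖D.esymm t‖ ≤ ((Multiset.card D).choose t : ℝ) * ρ ^ t := by
  rw [Multiset.esymm]
  calc ‖((D.powersetCard t).map Multiset.prod).sum‖
      ≤ (((D.powersetCard t).map Multiset.prod).map norm).sum := norm_multiset_sum_le _
  _ ≤ (Multiset.card (((D.powersetCard t).map Multiset.prod).map norm)) • (ρ ^ t) := by
      apply Multiset.sum_le_card_nsmul
      intro x hx
      rw [Multiset.map_map, Multiset.mem_map] at hx
      obtain ⟨S, hS, rfl⟩ := hx
      rw [Multiset.mem_powersetCard] at hS
      have := prod_norm_le ρ hρ0 S (fun x hxS => hρ x (Multiset.mem_of_le hS.1 hxS))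
      rw [hS.2] at this
      exact this
  _ = ((Multiset.card D).choose t : ℝ) * ρ ^ t := by
      rw [Multiset.card_map, Multiset.card_map, Multiset.card_powersetCard, nsmul_eq_mul]

private lemma gamma_nonneg {h : ℂ → ℂ} {m : ℂ} {γ : ℝ} (hγ : IsLUB (gammaSet h m) γ) : 0 ≤ γ :=
  le_trans (Real.rpow_nonneg (norm_nonneg _) _) (hγ.1 ⟨1, le_refl 1, rfl⟩)

private lemma gamma_bound {h : ℂ → ℂ} {m : ℂ} (hm : h m ≠ 0) {γ : ℝ}
    (hγ : IsLUB (gammaSet h m) γ) (l : ℕ) :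
    ‖iteratedDeriv l h m / (l.factorial : ℂ)‖ ≤ ‖h m‖ * γ ^ l := by
  rcases Nat.eq_zero_or_pos l with h0 | h0
  · subst h0; simp
  set y := ‖iteratedDeriv l h m / ((l.factorial : ℂ) * h m)‖ with hy
  have hyγ : y ^ ((1:ℝ)/l) ≤ γ := hγ.1 ⟨l, h0, rfl⟩
  have hyl : y ≤ γ ^ l := by
    have e : y = (y ^ ((1:ℝ)/l)) ^ (l:ℕ) := by
      rw [← Real.rpow_natCast (y ^ ((1:ℝ)/l)) l, ← Real.rpow_mul (norm_nonneg _), one_div,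
        inv_mul_cancel₀ (by exact_mod_cast h0.ne' : (l:ℝ) ≠ 0), Real.rpow_one]
    rw [e]
    exact pow_le_pow_left₀ (Real.rpow_nonneg (norm_nonneg _) _) hyγ l
  have e2 : iteratedDeriv l h m / (l.factorial : ℂ)
      = h m * (iteratedDeriv l h m / ((l.factorial : ℂ) * h m)) := by
    rw [mul_div_assoc', div_eq_div_iff (Nat.cast_ne_zero.2 (Nat.factorial_ne_zero l))
      (mul_ne_zero (Nat.cast_ne_zero.2 (Nat.factorial_ne_zero l)) hm)]
    ring
  rw [e2, norm_mul]
  exact mul_le_mul_of_nonneg_left hyl (norm_nonneg _)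

private lemma geomle (c : ℝ) (h0 : 0 ≤ c) (h1 : c < 1) (n : ℕ) :
    ∑ t ∈ range n, c ^ t ≤ (1 - c)⁻¹ := by
  have h2 : (0:ℝ) < 1 - c := by linarith
  have e : ∑ t ∈ range n, c ^ t = (1 - c ^ n) / (1 - c) := by
    rw [geom_sum_eq (by linarith : c ≠ 1)]
    rw [div_eq_div_iff (by linarith) (by linarith)]
    ring
  rw [e, div_le_iff₀ h2, inv_mul_cancel₀ h2.ne']
  have : 0 ≤ c ^ n := pow_nonneg h0 n
  linarith

private lemma sum_pow_sub_le (c : ℝ) (h0 : 0 ≤ c) (h1 : c < 1) (k : ℕ) :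
    ∑ i ∈ range k, c ^ (k - i) ≤ c * (1 - c)⁻¹ := by
  have e : ∑ i ∈ range k, c ^ (k - i) = ∑ j ∈ range k, c ^ (j + 1) := by
    rw [← Finset.sum_range_reflect (fun j => c ^ (j + 1)) k]
    exact Finset.sum_congr rfl fun i hi => by
      rw [mem_range] at hi; congr 1; omega
  rw [e]
  have : ∑ j ∈ range k, c ^ (j+1) = c * ∑ j ∈ range k, c ^ j := by
    rw [Finset.mul_sum]; exact Finset.sum_congr rfl fun j _ => by ring
  rw [this]
  exact mul_le_mul_of_nonneg_left (geomle c h0 h1 k) h0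

theorem stmt11 (C : Multiset ℂ) (k : ℕ) (hk : 1 ≤ k) (hcard : Multiset.card C = k)
    (mC : ℂ) (hmC : mC = C.sum / (k : ℂ))
    (rC : ℝ) (hrC : ∀ α ∈ C, ‖α - mC‖ ≤ rC)
    (h f : ℂ → ℂ) (hdiff : Differentiable ℂ h)
    (hf : ∀ w, f w = (C.map (fun α => w - α)).prod * h w)
    (m : ℂ) (hm : h m ≠ 0) (γ : ℝ) (hγ : IsLUB (gammaSet h m) γ)
    (r : ℝ) (hr1 : 8 * Real.exp 1 * k * (‖m - mC‖ + rC) ≤ r) (hr2 : r ≤ 1 / (2 * γ)) :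
    4 * ∑ j ∈ Finset.range k, ‖iteratedDeriv j f m / (j.factorial : ℂ)‖ * r ^ j ≤
      ‖iteratedDeriv k f m / (k.factorial : ℂ)‖ * r ^ k := by
  have hCne : C ≠ 0 := by
    intro h0; rw [h0] at hcard; simp at hcard; omega
  obtain ⟨α₀, hα₀⟩ := Multiset.exists_mem_of_ne_zero hCne
  set ρ : ℝ := ‖m - mC‖ + rC with hρdef
  have hrC0 : 0 ≤ rC := le_trans (norm_nonneg _) (hrC α₀ hα₀)
  have hρ0 : 0 ≤ ρ := by positivity
  clear_value ρ
  set P : Polynomial ℂ := (C.map fun α => X - Polynomial.C α).prod with hP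
  have hgP : ∀ w, (C.map fun α => w - α).prod = P.eval w := by
    intro w
    rw [hP, Polynomial.eval_multiset_prod, Multiset.map_map]
    congr 1
    refine Multiset.map_congr rfl fun α _ => ?_
    simp
  have hfeq : f = fun w => P.eval w * h w := funext fun w => by rw [hf w, hgP w]
  set gc : ℕ → ℂ := fun i => ((taylor m) P).coeff i with hgc
  have hesymm : ∀ i, i ≤ k → gc i = (C.map fun α => m - α).esymm (k - i) := by
    intro i hik
    have := taylor_prod_coeff C m i (by rw [hcard]; exact hik)
    rw [hcard] at this
    exact this
  have hDmem : ∀ x ∈ C.map (fun α => m - α), ‖x‖ ≤ ρ := by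
    intro x hx
    rw [Multiset.mem_map] at hx
    obtain ⟨α, hα, rfl⟩ := hx
    calc ‖m - α‖ = ‖(m - mC) - (α - mC)‖ := by ring_nf
    _ ≤ ‖m - mC‖ + ‖α - mC‖ := norm_sub_le _ _
    _ ≤ ‖m - mC‖ + rC := by linarith [hrC α hα]
    _ = ρ := hρdef.symm
  have hcardD : Multiset.card (C.map fun α => m - α) = k := by
    rw [Multiset.card_map, hcard]
  have hGk : gc k = 1 := by
    rw [hesymm k le_rfl, Nat.sub_self]
    simp [Multiset.esymm]
  have hGb : ∀ i, i ≤ k → ‖gc i‖ ≤ ((k:ℝ) * ρ) ^ (k - i) := by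
    intro i hik
    rw [hesymm i hik]
    calc ‖(C.map fun α => m - α).esymm (k - i)‖
        ≤ ((Multiset.card (C.map fun α => m - α)).choose (k-i) : ℝ) * ρ ^ (k-i) :=
          esymm_norm_le _ ρ hρ0 hDmem (k-i)
    _ ≤ (k:ℝ)^(k-i) * ρ^(k-i) := by
        rw [hcardD]
        have : (k.choose (k-i) : ℝ) ≤ (k:ℝ)^(k-i) := by
          exact_mod_cast Nat.choose_le_pow k (k-i)
        exact mul_le_mul_of_nonneg_right this (pow_nonneg hρ0 _)
    _ = ((k:ℝ) * ρ) ^ (k-i) := (mul_pow _ _ _).symm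
  have hPdiff : Differentiable ℂ (fun x => P.eval x) := P.differentiable
  have hfd : ∀ j : ℕ, iteratedDeriv j f m / (j.factorial : ℂ) =
      ∑ i ∈ range (j+1), gc i * (iteratedDeriv (j-i) h m / ((j-i).factorial : ℂ)) := by
    intro j
    rw [hfeq, leibniz_div _ _ hPdiff hdiff j m]
    refine Finset.sum_congr rfl fun i _ => ?_
    rw [iterD_poly P m i, mul_comm ((i.factorial : ℂ)) _, mul_div_assoc,
      div_self (Nat.cast_ne_zero.mpr (Nat.factorial_ne_zero i) : (i.factorial:ℂ) ≠ 0), mul_one]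
  have hB : ∀ l : ℕ, ‖iteratedDeriv l h m / (l.factorial : ℂ)‖ ≤ ‖h m‖ * γ ^ l :=
    gamma_bound hm hγ
  have hγ0 : 0 ≤ γ := gamma_nonneg hγ
  have hk1 : (1:ℝ) ≤ k := by exact_mod_cast hk
  have hkρ0 : 0 ≤ (k:ℝ) * ρ := by positivity
  have he2 : (2:ℝ) ≤ Real.exp 1 := by
    have := Real.add_one_le_exp (1:ℝ); linarith
  have hr0 : 0 ≤ r := le_trans (by positivity) hr1
  rcases eq_or_lt_of_le hr0 with hr0' | hrpos
  · -- degenerate case r = 0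
    have hρ00 : ρ = 0 := by nlinarith [Real.exp_pos 1]
    have hsum0 : ‖m - mC‖ + rC = 0 := by rw [← hρdef]; exact hρ00
    have hmmC : ‖m - mC‖ = 0 := by
      have := norm_nonneg (m - mC); linarith
    have hrC00 : rC = 0 := by linarith [norm_nonneg (m - mC)]
    have hα₀m : α₀ = m := by
      have h1 : ‖α₀ - mC‖ ≤ 0 := by rw [← hrC00]; exact hrC α₀ hα₀
      have h2 : α₀ = mC := by
        have := norm_nonneg (α₀ - mC)
        have : ‖α₀ - mC‖ = 0 := le_antisymm h1 (norm_nonneg _)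
        rwa [norm_eq_zero, sub_eq_zero] at this
      have h3 : m = mC := by
        rw [norm_eq_zero, sub_eq_zero] at hmmC; exact hmmC
      rw [h2, h3]
    have hfm : f m = 0 := by
      rw [hf m]
      have : (0:ℂ) ∈ C.map (fun α => m - α) := by
        rw [Multiset.mem_map]
        exact ⟨α₀, hα₀, by rw [hα₀m, sub_self]⟩
      rw [Multiset.prod_eq_zero this, zero_mul]
    rw [← hr0']
    have hL : ∑ j ∈ Finset.range k, ‖iteratedDeriv j f m / (j.factorial : ℂ)‖ * (0:ℝ) ^ j
        = 0 := by
      apply Finset.sum_eq_zero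
      intro j hj
      rcases Nat.eq_zero_or_pos j with h0 | h0
      · subst h0
        simp [iteratedDeriv_zero, hfm]
      · rw [zero_pow h0.ne', mul_zero]
    rw [hL, zero_pow (by omega : k ≠ 0), mul_zero, mul_zero]
  · -- main case 0 < r
    have hK16 : (k:ℝ) * ρ * 16 ≤ r := by nlinarith [Real.exp_pos 1]
    have hγr : γ * r ≤ 1/2 := by
      rcases eq_or_lt_of_le hγ0 with h0 | h0
      · rw [← h0]; norm_num
      · have h2γ : (0:ℝ) < 2 * γ := by linarith
        rw [le_div_iff₀ h2γ] at hr2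
        nlinarith
    have key1 : ∀ i, i < k → ‖gc i‖ * r^i ≤ r^k * (1/16 : ℝ)^(k-i) := by
      intro i hik
      have h1 : ‖gc i‖ ≤ ((k:ℝ)*ρ)^(k-i) := hGb i hik.le
      have hle : (k:ℝ)*ρ ≤ r/16 := by
        rw [le_div_iff₀ (by norm_num : (0:ℝ) < 16)]
        exact hK16
      have h2 : ((k:ℝ)*ρ)^(k-i) ≤ (r/16)^(k-i) :=
        pow_le_pow_left₀ hkρ0 hle _
      calc ‖gc i‖ * r^i ≤ (r/16)^(k-i) * r^i :=
            mul_le_mul_of_nonneg_right (h1.trans h2) (pow_nonneg hr0 i)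
      _ = r^k * (1/16:ℝ)^(k-i) := by
          have e1 : (r/16:ℝ)^(k-i) = r^(k-i) * (1/16:ℝ)^(k-i) := by
            rw [← mul_pow]; congr 1; ring
          have e2 : r^(k-i) * r^i = r^k := by
            rw [← pow_add]; congr 1; omega
          rw [e1, mul_assoc, mul_comm ((1/16:ℝ)^(k-i)) (r^i), ← mul_assoc, e2]
    have hγr0 : 0 ≤ γ * r := by positivity
    have hFb : ∀ j, ‖iteratedDeriv j f m / (j.factorial : ℂ)‖ ≤
        ∑ i ∈ range (j+1), ‖gc i‖ * (‖h m‖ * γ^(j-i)) := by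
      intro j
      rw [hfd j]
      refine le_trans (norm_sum_le _ _) (Finset.sum_le_sum fun i _ => ?_)
      rw [norm_mul]
      exact mul_le_mul_of_nonneg_left (hB (j-i)) (norm_nonneg _)
    have perj : ∀ j, j < k → (∑ i ∈ range (j+1), ‖gc i‖ * (‖h m‖ * γ^(j-i))) * r^j
        ≤ ‖h m‖ * (r^k * ((32/31) * (1/16:ℝ)^(k-j))) := by
      intro j hjk
      rw [Finset.sum_mul]
      have hterm : ∀ i ∈ range (j+1), ‖gc i‖ * (‖h m‖ * γ^(j-i)) * r^j
          ≤ (‖h m‖ * (r^k * (1/16:ℝ)^(k-j))) * (1/32:ℝ)^(j-i) := by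
        intro i hi
        rw [mem_range] at hi
        have hij : i ≤ j := by omega
        have e1 : r^j = r^i * r^(j-i) := by rw [← pow_add]; congr 1; omega
        have h3 : (γ*r)^(j-i) ≤ (1/2:ℝ)^(j-i) :=
          pow_le_pow_left₀ hγr0 hγr _
        have h4 : ‖gc i‖ * r^i ≤ r^k * (1/16:ℝ)^(k-i) := key1 i (by omega)
        calc ‖gc i‖ * (‖h m‖ * γ^(j-i)) * r^j
            = ‖h m‖ * ((‖gc i‖ * r^i) * (γ*r)^(j-i)) := by
              rw [e1, mul_pow]; ring
        _ ≤ ‖h m‖ * ((r^k * (1/16:ℝ)^(k-i)) * (1/2:ℝ)^(j-i)) := by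
              apply mul_le_mul_of_nonneg_left _ (norm_nonneg _)
              apply mul_le_mul h4 h3 (by positivity) (by positivity)
        _ = (‖h m‖ * (r^k * (1/16:ℝ)^(k-j))) * (1/32:ℝ)^(j-i) := by
              have e3 : (1/16:ℝ)^(k-i) = (1/16:ℝ)^(k-j) * (1/16:ℝ)^(j-i) := by
                rw [← pow_add]; congr 1; omega
              have e4 : (1/16:ℝ)^(j-i) * (1/2:ℝ)^(j-i) = (1/32:ℝ)^(j-i) := by
                rw [← mul_pow]; norm_num
              rw [e3, ← e4]; ring
      calc ∑ i ∈ range (j+1), ‖gc i‖ * (‖h m‖ * γ^(j-i)) * r^j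
          ≤ ∑ i ∈ range (j+1), (‖h m‖ * (r^k * (1/16:ℝ)^(k-j))) * (1/32:ℝ)^(j-i) :=
            Finset.sum_le_sum hterm
      _ = (‖h m‖ * (r^k * (1/16:ℝ)^(k-j))) * ∑ i ∈ range (j+1), (1/32:ℝ)^(j-i) := by
            rw [← Finset.mul_sum]
      _ ≤ (‖h m‖ * (r^k * (1/16:ℝ)^(k-j))) * (32/31) := by
            apply mul_le_mul_of_nonneg_left _ (by positivity)
            have e5 : ∑ i ∈ range (j+1), (1/32:ℝ)^(j-i) = ∑ t ∈ range (j+1), (1/32:ℝ)^t := by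
              rw [← Finset.sum_range_reflect (fun t => (1/32:ℝ)^t) (j+1)]
              exact Finset.sum_congr rfl fun i hi => by congr 1
            rw [e5]
            have hg := geomle (1/32:ℝ) (by norm_num) (by norm_num) (j+1)
            have he : ((1:ℝ) - 1/32)⁻¹ = 32/31 := by norm_num
            rw [he] at hg
            exact hg
      _ = ‖h m‖ * (r^k * ((32/31) * (1/16:ℝ)^(k-j))) := by ring
    -- upper bound on the sum
    have hS : ∑ j ∈ Finset.range k, ‖iteratedDeriv j f m / (j.factorial : ℂ)‖ * r ^ j
        ≤ ‖h m‖ * r^k * (32/31) * (1/15) := by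
      calc ∑ j ∈ Finset.range k, ‖iteratedDeriv j f m / (j.factorial : ℂ)‖ * r ^ j
          ≤ ∑ j ∈ Finset.range k, ‖h m‖ * (r^k * ((32/31) * (1/16:ℝ)^(k-j))) := by
            refine Finset.sum_le_sum fun j hj => ?_
            rw [mem_range] at hj
            exact le_trans (mul_le_mul_of_nonneg_right (hFb j) (pow_nonneg hr0 j))
              (perj j hj)
      _ = (‖h m‖ * r^k * (32/31)) * ∑ j ∈ Finset.range k, (1/16:ℝ)^(k-j) := by
            rw [Finset.mul_sum]
            exact Finset.sum_congr rfl fun j _ => by ring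
      _ ≤ (‖h m‖ * r^k * (32/31)) * (1/15) := by
            apply mul_le_mul_of_nonneg_left _ (by positivity)
            have hg := sum_pow_sub_le (1/16:ℝ) (by norm_num) (by norm_num) k
            have he : (1/16:ℝ) * ((1:ℝ) - 1/16)⁻¹ = 1/15 := by norm_num
            rw [he] at hg
            exact hg
      _ = ‖h m‖ * r^k * (32/31) * (1/15) := by ring
    -- lower bound on the k-th term
    have hkργ : (k:ℝ) * ρ * γ ≤ 1/32 := by
      nlinarith [mul_le_mul_of_nonneg_right hK16 hγ0]
    have hRHS : (30/31:ℝ) * ‖h m‖ ≤ ‖iteratedDeriv k f m / (k.factorial : ℂ)‖ := by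
      rw [hfd k, Finset.sum_range_succ, hGk, Nat.sub_self]
      simp only [iteratedDeriv_zero, Nat.factorial_zero, Nat.cast_one, one_mul, div_one]
      have hsum : ‖∑ i ∈ range k, gc i * (iteratedDeriv (k-i) h m / ((k-i).factorial : ℂ))‖
          ≤ (1/31:ℝ) * ‖h m‖ := by
        calc ‖∑ i ∈ range k, gc i * (iteratedDeriv (k-i) h m / ((k-i).factorial : ℂ))‖
            ≤ ∑ i ∈ range k, ‖gc i‖ * (‖h m‖ * γ^(k-i)) := by
              refine le_trans (norm_sum_le _ _) (Finset.sum_le_sum fun i _ => ?_)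
              rw [norm_mul]
              exact mul_le_mul_of_nonneg_left (hB (k-i)) (norm_nonneg _)
        _ ≤ ∑ i ∈ range k, ‖h m‖ * (1/32:ℝ)^(k-i) := by
              refine Finset.sum_le_sum fun i hi => ?_
              rw [mem_range] at hi
              have h1 : ‖gc i‖ * γ^(k-i) ≤ (1/32:ℝ)^(k-i) := by
                calc ‖gc i‖ * γ^(k-i) ≤ ((k:ℝ)*ρ)^(k-i) * γ^(k-i) :=
                      mul_le_mul_of_nonneg_right (hGb i hi.le) (pow_nonneg hγ0 _)
                _ = ((k:ℝ)*ρ*γ)^(k-i) := by rw [← mul_pow]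
                _ ≤ (1/32:ℝ)^(k-i) := pow_le_pow_left₀ (by positivity) hkργ _
              calc ‖gc i‖ * (‖h m‖ * γ^(k-i)) = ‖h m‖ * (‖gc i‖ * γ^(k-i)) := by ring
              _ ≤ ‖h m‖ * (1/32:ℝ)^(k-i) := mul_le_mul_of_nonneg_left h1 (norm_nonneg _)
        _ = ‖h m‖ * ∑ i ∈ range k, (1/32:ℝ)^(k-i) := by rw [Finset.mul_sum]
        _ ≤ ‖h m‖ * (1/31) := by
              apply mul_le_mul_of_nonneg_left _ (norm_nonneg _)
              have hg := sum_pow_sub_le (1/32:ℝ) (by norm_num) (by norm_num) k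
              have he : (1/32:ℝ) * ((1:ℝ) - 1/32)⁻¹ = 1/31 := by norm_num
              rw [he] at hg
              exact hg
        _ = (1/31:ℝ) * ‖h m‖ := by ring
      set Sg := ∑ i ∈ range k, gc i * (iteratedDeriv (k-i) h m / ((k-i).factorial : ℂ))
      have hge : ‖h m‖ - ‖Sg‖ ≤ ‖Sg + h m‖ := by
        have h5 := norm_add_le (Sg + h m) (-Sg)
        have e6 : Sg + h m + -Sg = h m := by ring
        rw [e6, norm_neg] at h5
        linarith
      linarith [hsum, hge]
    -- conclude
    have hhm0 : 0 ≤ ‖h m‖ := norm_nonneg _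
    have hrk0 : 0 ≤ r^k := pow_nonneg hr0 k
    calc 4 * ∑ j ∈ Finset.range k, ‖iteratedDeriv j f m / (j.factorial : ℂ)‖ * r ^ j
        ≤ 4 * (‖h m‖ * r^k * (32/31) * (1/15)) := by linarith [hS]
    _ ≤ (30/31) * ‖h m‖ * r^k := by
        have hX : 0 ≤ ‖h m‖ * r^k := mul_nonneg hhm0 hrk0
        nlinarith [hX]
    _ ≤ ‖iteratedDeriv k f m / (k.factorial : ℂ)‖ * r ^ k := by
        have := mul_le_mul_of_nonneg_right hRHS hrk0
        linarith [this]
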